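/- For any A > 0 and δ > 0, there exists a one-hidden-layer ReLU network φ_δ(x) = Σ_{j=1}^M a_j·ReLU(w_j x + b_j) with M = ⌈2A²/δ⌉ + 1 neurons, weights satisfying |a_j| ≤ 2A, |w_j| ≤ 1, |b_j| ≤ A, such that sup_{x ∈ [−A, A]} |φ_δ(x) − x²| ≤ δ. -/

import Mathlib

/-- Pair of ReLUs gives a ReLU of the absolute value. -/
lemma relu_pair (x m : ℝ) (hm : 0 ≤ m) :
    max (x - m) 0 + max (-x - m) 0 = max (|x| - m) 0 := by
  rcases le_total 0 x with hx | hx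
  · rw [abs_of_nonneg hx, max_eq_right (show -x - m ≤ 0 by linarith), add_zero]
  · rw [abs_of_nonpos hx, max_eq_right (show x - m ≤ 0 by linarith), zero_add]

lemma sq_approx (h y : ℝ) (n : ℕ) (hh : 0 < h) (hy : 0 ≤ y) (hyn : y ≤ n * h) :
    |(∑ k ∈ Finset.range n, 2 * h * max (y - ((k : ℝ) + 1/2) * h) 0) - y ^ 2|
      ≤ h ^ 2 / 4 := by
  set j := ⌊y / h + 1/2⌋₊ with hjdef
  have h0 : (0:ℝ) ≤ y / h + 1/2 := by positivity
  have hjle : (j : ℝ) ≤ y / h + 1/2 := Nat.floor_le h0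
  have hjgt : y / h + 1/2 < (j : ℝ) + 1 := Nat.lt_floor_add_one _
  have hyh : y / h ≤ (n : ℝ) := (div_le_iff₀ hh).2 (by linarith)
  have hjn : j ≤ n := by
    have h1 : (j : ℝ) < (n : ℝ) + 1 := by linarith
    have h2 : j < n + 1 := by exact_mod_cast h1
    omega
  have hval : ∀ m : ℕ, (∑ k ∈ Finset.range m, 2 * h * (y - ((k : ℝ) + 1/2) * h))
      = 2 * h * m * y - h ^ 2 * m ^ 2 := by
    intro m
    induction m with
    | zero => simp
    | succ p ih => rw [Finset.sum_range_succ, ih]; push_cast; ring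
  have hsplit : ∑ k ∈ Finset.range n, 2 * h * max (y - ((k : ℝ) + 1/2) * h) 0
      = ∑ k ∈ Finset.range j, 2 * h * max (y - ((k : ℝ) + 1/2) * h) 0
        + ∑ k ∈ Finset.Ico j n, 2 * h * max (y - ((k : ℝ) + 1/2) * h) 0 := by
    rw [Finset.range_eq_Ico, Finset.range_eq_Ico]
    exact (Finset.sum_Ico_consecutive _ (Nat.zero_le j) hjn).symm
  have hzero : ∑ k ∈ Finset.Ico j n, 2 * h * max (y - ((k : ℝ) + 1/2) * h) 0 = 0 := by
    apply Finset.sum_eq_zero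
    intro k hk
    have hk' : j ≤ k := (Finset.mem_Ico.mp hk).1
    have hkr : (j : ℝ) ≤ (k : ℝ) := by exact_mod_cast hk'
    have h1 : y / h < (k : ℝ) + 1/2 := by linarith
    have h2 : y < ((k : ℝ) + 1/2) * h := (div_lt_iff₀ hh).1 h1
    rw [max_eq_right (by linarith), mul_zero]
  have hpos : ∑ k ∈ Finset.range j, 2 * h * max (y - ((k : ℝ) + 1/2) * h) 0
      = ∑ k ∈ Finset.range j, 2 * h * (y - ((k : ℝ) + 1/2) * h) := by
    apply Finset.sum_congr rfl
    intro k hk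
    have hk' : k < j := Finset.mem_range.mp hk
    have hkr : (k : ℝ) + 1 ≤ (j : ℝ) := by exact_mod_cast hk'
    have h1 : (k : ℝ) + 1/2 ≤ y / h := by linarith
    have h2 : ((k : ℝ) + 1/2) * h ≤ y := (le_div_iff₀ hh).1 h1
    rw [max_eq_left (by linarith)]
  rw [hsplit, hzero, add_zero, hpos, hval j]
  have hq : y / h * h = y := div_mul_cancel₀ y hh.ne'
  have hd1 : h * (j : ℝ) ≤ y + h / 2 := by
    nlinarith [mul_nonneg (by linarith : (0:ℝ) ≤ y / h + 1/2 - (j:ℝ)) hh.le]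
  have hd2 : y - h / 2 ≤ h * (j : ℝ) := by
    nlinarith [mul_nonneg (by linarith : (0:ℝ) ≤ (j:ℝ) + 1/2 - y / h) hh.le]
  have heq : 2 * h * (j : ℝ) * y - h ^ 2 * (j : ℝ) ^ 2 - y ^ 2
      = -((y - h * (j : ℝ)) ^ 2) := by ring
  rw [heq, abs_neg, abs_of_nonneg (sq_nonneg _)]
  nlinarith

/-- ReLU-network approximation of the square function on `[-A, A]` with
`M = ⌈2 A² / δ⌉ + 1` neurons. -/
theorem relu_approx_sq (A δ : ℝ) (hA : 0 < A) (hδ : 0 < δ) :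
    ∃ a w b : Fin (⌈2 * A ^ 2 / δ⌉₊ + 1) → ℝ,
      (∀ j, |a j| ≤ 2 * A) ∧ (∀ j, |w j| ≤ 1) ∧ (∀ j, |b j| ≤ A) ∧
      ∀ x ∈ Set.Icc (-A) A,
        |(∑ j, a j * max (w j * x + b j) 0) - x ^ 2| ≤ δ := by
  set M : ℕ := ⌈2 * A ^ 2 / δ⌉₊ + 1 with hM
  set n : ℕ := M / 2 with hn
  have hc : (0:ℝ) < 2 * A ^ 2 / δ := by positivity
  have hceil : 1 ≤ ⌈2 * A ^ 2 / δ⌉₊ := Nat.one_le_iff_ne_zero.mpr (by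
    simp [Nat.ceil_eq_zero, not_le, hc])
  have hn1 : 1 ≤ n := by omega
  have h2n : 2 * n ≤ M := by omega
  have h2n' : ⌈2 * A ^ 2 / δ⌉₊ ≤ 2 * n := by omega
  have hnpos : (0:ℝ) < (n : ℝ) := by exact_mod_cast hn1
  have hnA : A ^ 2 ≤ (n : ℝ) * δ := by
    have h1 : 2 * A ^ 2 / δ ≤ (⌈2 * A ^ 2 / δ⌉₊ : ℝ) := Nat.le_ceil _
    have h2 : ((⌈2 * A ^ 2 / δ⌉₊ : ℕ) : ℝ) ≤ 2 * (n : ℝ) := by exact_mod_cast h2n'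
    have h3 : 2 * A ^ 2 / δ ≤ 2 * (n : ℝ) := le_trans h1 h2
    have h4 : 2 * A ^ 2 ≤ 2 * (n : ℝ) * δ := by
      have := (div_le_iff₀ hδ).1 h3
      linarith
    linarith
  set h : ℝ := A / n with hh
  have hhpos : 0 < h := by positivity
  have hn1r : (1:ℝ) ≤ (n : ℝ) := by exact_mod_cast hn1
  set a' : ℕ → ℝ := fun i => if i < 2 * n then 2 * h else 0 with ha'
  set w' : ℕ → ℝ := fun i => if i < n then 1 else -1 with hw'
  set b' : ℕ → ℝ := fun i =>
    if i < n then -(((i : ℝ) + 1/2) * h)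
    else if i < 2 * n then -((((i - n : ℕ) : ℝ) + 1/2) * h) else 0 with hb'
  have hmid : ∀ k : ℕ, k < n → ((k : ℝ) + 1/2) * h ≤ A := by
    intro k hk
    have hkr : (k : ℝ) + 1 ≤ (n : ℝ) := by exact_mod_cast hk
    have : ((k : ℝ) + 1/2) * h ≤ (n : ℝ) * h := by nlinarith
    have hnh : (n : ℝ) * h = A := by rw [hh, mul_div_assoc']; exact mul_div_cancel_left₀ A hnpos.ne'
    linarith [this, hnh.le]
  refine ⟨fun j => a' j, fun j => w' j, fun j => b' j, ?_, ?_, ?_, ?_⟩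
  · intro j
    simp only [ha']
    split
    · rw [abs_of_nonneg (by positivity)]
      have : h ≤ A := by
        rw [hh, div_le_iff₀ hnpos]; nlinarith [hn1r, hA]
      linarith
    · simp [abs_nonneg]; positivity
  · intro j
    simp only [hw']
    split <;> simp
  · intro j
    simp only [hb']
    split
    · rename_i hj
      rw [abs_neg, abs_of_nonneg (by positivity)]
      exact hmid _ hj
    · split
      · rename_i hj1 hj2
        rw [abs_neg, abs_of_nonneg (by positivity)]
        exact hmid _ (by omega)
      · simpa using hA.le
  · intro x hx
    obtain ⟨hx1, hx2⟩ := hx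
    have habs : |x| ≤ A := abs_le.mpr ⟨hx1, hx2⟩
    have hsum : (∑ j : Fin M, a' j * max (w' j * x + b' j) 0)
        = ∑ i ∈ Finset.range M, a' i * max (w' i * x + b' i) 0 :=
      Fin.sum_univ_eq_sum_range (fun i => a' i * max (w' i * x + b' i) 0) M
    rw [hsum]
    have hsplit1 : ∑ i ∈ Finset.range M, a' i * max (w' i * x + b' i) 0
        = ∑ i ∈ Finset.range (2*n), a' i * max (w' i * x + b' i) 0
          + ∑ i ∈ Finset.Ico (2*n) M, a' i * max (w' i * x + b' i) 0 := by
      rw [Finset.range_eq_Ico, Finset.range_eq_Ico]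
      exact (Finset.sum_Ico_consecutive _ (Nat.zero_le _) h2n).symm
    have htail : ∑ i ∈ Finset.Ico (2*n) M, a' i * max (w' i * x + b' i) 0 = 0 := by
      apply Finset.sum_eq_zero
      intro i hi
      have : ¬ i < 2 * n := by
        have := (Finset.mem_Ico.mp hi).1; omega
      simp [ha', this]
    have hsplit2 : ∑ i ∈ Finset.range (2*n), a' i * max (w' i * x + b' i) 0
        = ∑ i ∈ Finset.range n, a' i * max (w' i * x + b' i) 0
          + ∑ i ∈ Finset.Ico n (2*n), a' i * max (w' i * x + b' i) 0 := by
      rw [Finset.range_eq_Ico, Finset.range_eq_Ico]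
      exact (Finset.sum_Ico_consecutive _ (Nat.zero_le _) (by omega : n ≤ 2*n)).symm
    have hshift : ∑ i ∈ Finset.Ico n (2*n), a' i * max (w' i * x + b' i) 0
        = ∑ k ∈ Finset.range n, 2 * h * max (-x - ((k : ℝ) + 1/2) * h) 0 := by
      rw [Finset.sum_Ico_eq_sum_range]
      have hnn : 2 * n - n = n := by omega
      rw [hnn]
      apply Finset.sum_congr rfl
      intro k hk
      have hk' : k < n := Finset.mem_range.mp hk
      have h1 : ¬ (n + k < n) := by omega
      have h2 : n + k < 2 * n := by omega
      have h3 : n + k - n = k := by omega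
      simp only [ha', hw', hb', h1, h2, h3, if_true, if_false, if_pos, if_neg]
      ring_nf
    have hleft : ∑ i ∈ Finset.range n, a' i * max (w' i * x + b' i) 0
        = ∑ k ∈ Finset.range n, 2 * h * max (x - ((k : ℝ) + 1/2) * h) 0 := by
      apply Finset.sum_congr rfl
      intro k hk
      have hk' : k < n := Finset.mem_range.mp hk
      have h2 : k < 2 * n := by omega
      simp only [ha', hw', hb', hk', h2, if_true]
      ring_nf
    rw [hsplit1, htail, add_zero, hsplit2, hshift, hleft, ← Finset.sum_add_distrib]
    have hcomb : ∑ k ∈ Finset.range n,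
        (2 * h * max (x - ((k : ℝ) + 1/2) * h) 0
          + 2 * h * max (-x - ((k : ℝ) + 1/2) * h) 0)
        = ∑ k ∈ Finset.range n, 2 * h * max (|x| - ((k : ℝ) + 1/2) * h) 0 := by
      apply Finset.sum_congr rfl
      intro k hk
      rw [← mul_add, relu_pair x _ (by positivity)]
    rw [hcomb]
    have hyn : |x| ≤ (n : ℝ) * h := by
      have hnh : (n : ℝ) * h = A := by rw [hh, mul_div_assoc']; exact mul_div_cancel_left₀ A hnpos.ne'
      rw [hnh]; exact habs
    have key := sq_approx h |x| n hhpos (abs_nonneg x) hyn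
    rw [sq_abs] at key
    have hbound : h ^ 2 / 4 ≤ δ := by
      have h1 : h = A / n := hh
      have h2 : h ^ 2 = A ^ 2 / (n : ℝ) ^ 2 := by rw [h1]; ring
      rw [h2, div_le_iff₀ (by norm_num : (0:ℝ) < 4),
        div_le_iff₀ (by positivity : (0:ℝ) < (n:ℝ)^2)]
      nlinarith [hnA, hn1r, hδ.le,
        mul_nonneg hδ.le (mul_nonneg hnpos.le (by linarith : (0:ℝ) ≤ (n:ℝ) - 1))]
    linarith [key, hbound]
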